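/- If L is a Latin square of order n with n ≥ 2, then 3n − 2 − ⌊log₂ n⌋ ≤ mcs(L) ≤ 3n − 3, where mcs(L) is the maximum length of a cover-sequence of L. -/

import Mathlib

open Finset

/-- An entry of a Latin square with rows/columns/symbols indexed by `X`. -/
abbrev Entry (X : Type*) := X × X × X

/-- A line of a Latin square: a tag (0 = row, 1 = column, 2 = symbol) and an index. -/
abbrev Line (X : Type*) := Fin 3 × X

/-- The entry `e` lies on the line `ℓ`. -/
def onLine {X : Type*} (e : Entry X) (ℓ : Line X) : Prop :=
  (ℓ.1 = 0 ∧ e.1 = ℓ.2) ∨ (ℓ.1 = 1 ∧ e.2.1 = ℓ.2) ∨ (ℓ.1 = 2 ∧ e.2.2 = ℓ.2)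

instance {X : Type*} [DecidableEq X] (e : Entry X) (ℓ : Line X) : Decidable (onLine e ℓ) := by
  unfold onLine; infer_instance

/-- `L` is a Latin square (on the full index set `X`). -/
def IsLatin {X : Type*} (L : Finset (Entry X)) : Prop :=
  (∀ r c : X, ∃! s : X, (r, c, s) ∈ L) ∧
  (∀ r s : X, ∃! c : X, (r, c, s) ∈ L) ∧
  (∀ c s : X, ∃! r : X, (r, c, s) ∈ L)

/-- Lazy-burning closure in the hypergraph `H_L`: vertices are the entries of `L`,
hyperedges are the lines of `L`; a vertex burns if it is the unique unburned vertex of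
a hyperedge of size at least 2. -/
inductive BurnedHL {X : Type*} [DecidableEq X] (L S : Finset (Entry X)) : Entry X → Prop
  | init {e : Entry X} : e ∈ S → BurnedHL L S e
  | prop {e : Entry X} (ℓ : Line X) : e ∈ L → onLine e ℓ →
      2 ≤ (L.filter (fun f => onLine f ℓ)).card →
      (∀ f ∈ L, onLine f ℓ → f ≠ e → BurnedHL L S f) → BurnedHL L S e

/-- `S` is a lazy burning set of the hypergraph `H_L`. -/
def IsLazyBurningSetHL {X : Type*} [DecidableEq X] (L S : Finset (Entry X)) : Prop :=
  S ⊆ L ∧ ∀ e ∈ L, BurnedHL L S e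

/-- The lazy burning number of `H_L`. -/
noncomputable def lbHL {X : Type*} [DecidableEq X] (L : Finset (Entry X)) : ℕ :=
  sInf {k | ∃ S : Finset (Entry X), IsLazyBurningSetHL L S ∧ S.card = k}

/-- A cover of `L`: a set of entries of `L` meeting every line. -/
def IsCover {X : Type*} (L C : Finset (Entry X)) : Prop :=
  C ⊆ L ∧ ∀ ℓ : Line X, ∃ e ∈ C, onLine e ℓ

/-- A weak cover-sequence of `L`: each entry lies on a line containing no earlier entry. -/
def IsWeakCoverSeq {X : Type*} (L : Finset (Entry X)) (es : List (Entry X)) : Prop :=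
  (∀ e ∈ es, e ∈ L) ∧
  ∀ i : Fin es.length, ∃ ℓ : Line X, onLine (es.get i) ℓ ∧
    ∀ j : Fin es.length, (j : ℕ) < (i : ℕ) → ¬ onLine (es.get j) ℓ

/-- A cover-sequence of `L`: a weak cover-sequence whose entries form a cover. -/
def IsCoverSeq {X : Type*} (L : Finset (Entry X)) (es : List (Entry X)) : Prop :=
  IsWeakCoverSeq L es ∧ ∀ ℓ : Line X, ∃ e ∈ es, onLine e ℓ

/-- `mcs L`: the maximum length of a cover-sequence of `L`. -/
noncomputable def mcs {X : Type*} (L : Finset (Entry X)) : ℕ :=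
  sSup {d | ∃ es : List (Entry X), IsCoverSeq L es ∧ es.length = d}

/-- `T` is a subsquare of `L`: `T = L ∩ (R × C × S)` with `|R| = |C| = |S|`, and `T`
is itself a Latin square on rows `R`, columns `C`, symbols `S`. -/
def IsSubsquare {X : Type*} [DecidableEq X] (L T : Finset (Entry X)) : Prop :=
  ∃ R C S : Finset X, R.card = C.card ∧ C.card = S.card ∧
    T = L.filter (fun e => e.1 ∈ R ∧ e.2.1 ∈ C ∧ e.2.2 ∈ S) ∧
    (∀ r ∈ R, ∀ c ∈ C, ∃! s, s ∈ S ∧ (r, c, s) ∈ T) ∧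
    (∀ r ∈ R, ∀ s ∈ S, ∃! c, c ∈ C ∧ (r, c, s) ∈ T) ∧
    (∀ c ∈ C, ∀ s ∈ S, ∃! r, r ∈ R ∧ (r, c, s) ∈ T)

/-- `Sq 0 ⊆ Sq 1 ⊆ ⋯ ⊆ Sq α` is a connected chain of subsquares of `L`, from the empty
subsquare through a single entry up to `L` itself. -/
def IsConnectedChain {X : Type*} [DecidableEq X] (L : Finset (Entry X)) (α : ℕ)
    (Sq : ℕ → Finset (Entry X)) : Prop :=
  1 ≤ α ∧ Sq 0 = ∅ ∧ (Sq 1).card = 1 ∧ Sq α = L ∧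
  (∀ i ≤ α, IsSubsquare L (Sq i)) ∧
  (∀ i < α, Sq i ⊆ Sq (i + 1)) ∧
  (∀ i, 1 ≤ i → i ≤ α → ∃ ℓ : Line X,
      (∃ e ∈ Sq i, onLine e ℓ) ∧ ¬(∃ e ∈ Sq (i - 1), onLine e ℓ) ∧
      (∀ T, IsSubsquare L T → Sq (i - 1) ⊆ T → (∃ e ∈ T, onLine e ℓ) → Sq i ⊆ T))

/-- `scc L`: the minimum length of a connected chain of subsquares of `L`. -/
noncomputable def scc {X : Type*} [DecidableEq X] (L : Finset (Entry X)) : ℕ :=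
  sInf {α | ∃ Sq : ℕ → Finset (Entry X), IsConnectedChain L α Sq}

/-- Lazy-burning closure in the 3-uniform hypergraph `H^L`: vertices are the lines of `L`,
and each entry of `L` induces the hyperedge consisting of its three lines. -/
inductive BurnedH3 {X : Type*} (L : Finset (Entry X)) (S : Finset (Line X)) : Line X → Prop
  | init {ℓ : Line X} : ℓ ∈ S → BurnedH3 L S ℓ
  | prop {ℓ : Line X} (e : Entry X) : e ∈ L → onLine e ℓ →
      (∀ ℓ' : Line X, onLine e ℓ' → ℓ' ≠ ℓ → BurnedH3 L S ℓ') → BurnedH3 L S ℓ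

/-- `S` is a lazy burning set of the 3-uniform hypergraph `H^L`. -/
def IsLazyBurningSetH3 {X : Type*} (L : Finset (Entry X)) (S : Finset (Line X)) : Prop :=
  ∀ ℓ : Line X, BurnedH3 L S ℓ

/-- The lazy burning number of `H^L`. -/
noncomputable def lbH3 {X : Type*} (L : Finset (Entry X)) : ℕ :=
  sInf {k | ∃ S : Finset (Line X), IsLazyBurningSetH3 L S ∧ S.card = k}

set_option linter.unusedSectionVars false

section Helpers
variable {X : Type*} [DecidableEq X]

lemma onLine_row (f : Entry X) (x : X) : onLine f ((0 : Fin 3), x) ↔ f.1 = x := by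
  simp [onLine]

lemma onLine_col (f : Entry X) (x : X) : onLine f ((1 : Fin 3), x) ↔ f.2.1 = x := by
  simp [onLine]

lemma onLine_sym (f : Entry X) (x : X) : onLine f ((2 : Fin 3), x) ↔ f.2.2 = x := by
  simp [onLine]

def covR (es : List (Entry X)) : Finset X := (es.map Prod.fst).toFinset
def covC (es : List (Entry X)) : Finset X := (es.map (fun e => e.2.1)).toFinset
def covS (es : List (Entry X)) : Finset X := (es.map (fun e => e.2.2)).toFinset

lemma mem_covR {es : List (Entry X)} {x : X} : x ∈ covR es ↔ ∃ e ∈ es, e.1 = x := by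
  simp [covR]
lemma mem_covC {es : List (Entry X)} {x : X} : x ∈ covC es ↔ ∃ e ∈ es, e.2.1 = x := by
  simp [covC]
lemma mem_covS {es : List (Entry X)} {x : X} : x ∈ covS es ↔ ∃ e ∈ es, e.2.2 = x := by
  simp [covS]

lemma covR_cons (e : Entry X) (es : List (Entry X)) : covR (e :: es) = insert e.1 (covR es) := by
  simp [covR]
lemma covC_cons (e : Entry X) (es : List (Entry X)) : covC (e :: es) = insert e.2.1 (covC es) := by
  simp [covC]
lemma covS_cons (e : Entry X) (es : List (Entry X)) : covS (e :: es) = insert e.2.2 (covS es) := by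
  simp [covS]

/-- `es` (in reversed order: head is the most recent entry) is a valid weak cover sequence. -/
def Grev (L : Finset (Entry X)) : List (Entry X) → Prop
  | [] => True
  | e :: es => e ∈ L ∧ (∃ ℓ : Line X, onLine e ℓ ∧ ∀ f ∈ es, ¬ onLine f ℓ) ∧ Grev L es

lemma Grev.mem_L {L : Finset (Entry X)} : ∀ {es : List (Entry X)}, Grev L es → ∀ e ∈ es, e ∈ L
  | [], _, e, he => by cases he
  | f :: es, h, e, he => by
      rcases List.mem_cons.1 he with he | he
      · subst he; exact h.1
      · exact Grev.mem_L h.2.2 e he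

lemma weak_append {L : Finset (Entry X)} {xs : List (Entry X)} {e : Entry X}
    (he : e ∈ L) (hx : IsWeakCoverSeq L xs)
    (hℓ : ∃ ℓ : Line X, onLine e ℓ ∧ ∀ f ∈ xs, ¬ onLine f ℓ) :
    IsWeakCoverSeq L (xs ++ [e]) := by
  constructor
  · intro f hf
    rcases List.mem_append.1 hf with hf | hf
    · exact hx.1 f hf
    · simp at hf; subst hf; exact he
  · intro i
    have hlen : (xs ++ [e]).length = xs.length + 1 := by simp
    by_cases hi : (i : ℕ) < xs.length
    · have hget : (xs ++ [e]).get i = xs.get ⟨i, hi⟩ := by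
        simp [List.get_eq_getElem, List.getElem_append_left hi]
      obtain ⟨ℓ, h1, h2⟩ := hx.2 ⟨i, hi⟩
      refine ⟨ℓ, by rwa [hget], ?_⟩
      intro j hj
      have hj' : (j : ℕ) < xs.length := lt_trans hj hi
      have hgj : (xs ++ [e]).get j = xs.get ⟨j, hj'⟩ := by
        simp [List.get_eq_getElem, List.getElem_append_left hj']
      rw [hgj]
      exact h2 ⟨j, hj'⟩ hj
    · have hieq : (i : ℕ) = xs.length := by
        have := i.2; omega
      have hget : (xs ++ [e]).get i = e := by
        simp [List.get_eq_getElem, List.getElem_append_right (le_of_eq hieq.symm), hieq]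
      obtain ⟨ℓ, h1, h2⟩ := hℓ
      refine ⟨ℓ, by rwa [hget], ?_⟩
      intro j hj
      have hj' : (j : ℕ) < xs.length := by omega
      have hgj : (xs ++ [e]).get j = xs.get ⟨j, hj'⟩ := by
        simp [List.get_eq_getElem, List.getElem_append_left hj']
      rw [hgj]
      exact h2 _ (List.get_mem xs ⟨j, hj'⟩)

lemma grev_weak {L : Finset (Entry X)} : ∀ {es : List (Entry X)}, Grev L es →
    IsWeakCoverSeq L es.reverse
  | [], _ => ⟨by simp, fun i => by simp at i; exact absurd i.2 (by omega)⟩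
  | e :: es, h => by
      have : (e :: es).reverse = es.reverse ++ [e] := by simp
      rw [this]
      refine weak_append h.1 (grev_weak h.2.2) ?_
      obtain ⟨ℓ, h1, h2⟩ := h.2.1
      exact ⟨ℓ, h1, fun f hf => h2 f (by simpa using hf)⟩

end Helpers
section UpperB
variable {X : Type*} [DecidableEq X]

def linesOf (e : Entry X) : Finset (Line X) :=
  {((0 : Fin 3), e.1), ((1 : Fin 3), e.2.1), ((2 : Fin 3), e.2.2)}

lemma mem_linesOf' {e : Entry X} {ℓ : Line X} :
    ℓ ∈ linesOf e ↔ ℓ = ((0 : Fin 3), e.1) ∨ ℓ = ((1 : Fin 3), e.2.1) ∨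
      ℓ = ((2 : Fin 3), e.2.2) := by
  simp [linesOf]

lemma mem_linesOf {e : Entry X} {ℓ : Line X} : ℓ ∈ linesOf e ↔ onLine e ℓ := by
  rcases ℓ with ⟨t, x⟩
  rw [mem_linesOf']
  simp only [onLine, Prod.mk.injEq]
  constructor
  · rintro (⟨h1, h2⟩ | ⟨h1, h2⟩ | ⟨h1, h2⟩) <;> subst h1 <;> simp [h2.symm]
  · rintro (⟨h1, h2⟩ | ⟨h1, h2⟩ | ⟨h1, h2⟩) <;> subst h1 <;> simp [h2]

lemma card_linesOf (e : Entry X) : (linesOf e).card = 3 := by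
  rw [linesOf, Finset.card_insert_of_notMem, Finset.card_insert_of_notMem,
    Finset.card_singleton]
  · simp [Prod.ext_iff]
  · simp [Prod.ext_iff]

lemma latin_ext {L : Finset (Entry X)} (hL : IsLatin L) {e f : Entry X}
    (he : e ∈ L) (hf : f ∈ L) :
    (e.1 = f.1 ∧ e.2.1 = f.2.1) ∨ (e.1 = f.1 ∧ e.2.2 = f.2.2) ∨
      (e.2.1 = f.2.1 ∧ e.2.2 = f.2.2) → e = f := by
  have he' : (e.1, e.2.1, e.2.2) ∈ L := he
  have hf' : (f.1, f.2.1, f.2.2) ∈ L := hf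
  rintro (⟨h1, h2⟩ | ⟨h1, h2⟩ | ⟨h1, h2⟩)
  · have := (hL.1 e.1 e.2.1).unique he' (by rw [h1, h2] at he' ⊢; exact hf')
    exact Prod.ext h1 (Prod.ext h2 this)
  · have := (hL.2.1 e.1 e.2.2).unique he' (by rw [h1, h2] at he' ⊢; exact hf')
    exact Prod.ext h1 (Prod.ext this h2)
  · have := (hL.2.2 e.2.1 e.2.2).unique he' (by rw [h1, h2] at he' ⊢; exact hf')
    exact Prod.ext this (Prod.ext h1 h2)

lemma shared_le_one {L : Finset (Entry X)} (hL : IsLatin L) {e f : Entry X}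
    (he : e ∈ L) (hf : f ∈ L) (hne : e ≠ f) : (linesOf e ∩ linesOf f).card ≤ 1 := by
  rw [Finset.card_le_one]
  intro a ha b hb
  simp only [Finset.mem_inter] at ha hb
  have key : ∀ ℓ : Line X, ℓ ∈ linesOf e → ℓ ∈ linesOf f →
      (ℓ = ((0 : Fin 3), e.1) ∧ e.1 = f.1) ∨ (ℓ = ((1 : Fin 3), e.2.1) ∧ e.2.1 = f.2.1) ∨
        (ℓ = ((2 : Fin 3), e.2.2) ∧ e.2.2 = f.2.2) := by
    intro ℓ h1 h2
    rw [mem_linesOf'] at h1 h2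
    rcases h1 with h1 | h1 | h1 <;> rcases h2 with h2 | h2 | h2 <;> subst h1 <;>
      simp only [Prod.mk.injEq] at h2 <;> simp_all <;> tauto
  have ha' := key a ha.1 ha.2
  have hb' := key b hb.1 hb.2
  rcases ha' with ⟨ha1, ha2⟩ | ⟨ha1, ha2⟩ | ⟨ha1, ha2⟩ <;>
    rcases hb' with ⟨hb1, hb2⟩ | ⟨hb1, hb2⟩ | ⟨hb1, hb2⟩ <;>
    first
      | (exact absurd (latin_ext hL he hf (Or.inl ⟨ha2, hb2⟩)) hne)
      | (exact absurd (latin_ext hL he hf (Or.inl ⟨hb2, ha2⟩)) hne)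
      | (exact absurd (latin_ext hL he hf (Or.inr (Or.inl ⟨ha2, hb2⟩))) hne)
      | (exact absurd (latin_ext hL he hf (Or.inr (Or.inl ⟨hb2, ha2⟩))) hne)
      | (exact absurd (latin_ext hL he hf (Or.inr (Or.inr ⟨ha2, hb2⟩))) hne)
      | (exact absurd (latin_ext hL he hf (Or.inr (Or.inr ⟨hb2, ha2⟩))) hne)
      | (rw [ha1, hb1])
end UpperB
lemma upper_len {n : ℕ} (hn : 2 ≤ n) {L : Finset (Entry (Fin n))} (hL : IsLatin L)
    {es : List (Entry (Fin n))} (hes : IsWeakCoverSeq L es) : es.length + 3 ≤ 3 * n := by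
  by_cases hd4 : es.length ≤ 3
  · omega
  push_neg at hd4
  have h0 : 0 < es.length := by omega
  have h1 : 1 < es.length := by omega
  set d := es.length with hd
  set φ : Fin d → Line (Fin n) := fun i => (hes.2 i).choose with hφdef
  have hφA : ∀ i : Fin d, onLine (es.get i) (φ i) := fun i => (hes.2 i).choose_spec.1
  have hφB : ∀ i j : Fin d, (j : ℕ) < (i : ℕ) → ¬ onLine (es.get j) (φ i) :=
    fun i j h => (hes.2 i).choose_spec.2 j h
  set i0 : Fin d := ⟨0, h0⟩
  set i1 : Fin d := ⟨1, h1⟩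
  set e0 := es.get i0 with he0
  set e1 := es.get i1 with he1
  have he0L : e0 ∈ L := hes.1 _ (List.get_mem _ _)
  have he1L : e1 ∈ L := hes.1 _ (List.get_mem _ _)
  have hne : e0 ≠ e1 := by
    intro h
    have h2 : ¬ onLine e0 (φ i1) := hφB i1 i0 (by simp [i0, i1])
    exact h2 (h ▸ hφA i1)
  set A1 : Finset (Line (Fin n)) := linesOf e0 \ {φ i0} with hA1def
  set A2 : Finset (Line (Fin n)) := linesOf e1 \ {φ i0, φ i1} with hA2def
  set B := A1 ∪ A2 with hBdef
  have hφ0mem : φ i0 ∈ linesOf e0 := mem_linesOf.2 (hφA i0)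
  have hφ1mem : φ i1 ∈ linesOf e1 := mem_linesOf.2 (hφA i1)
  have hφ1e0 : φ i1 ∉ linesOf e0 := by
    rw [mem_linesOf]
    exact hφB i1 i0 (by simp [i0, i1])
  have hA1card : 2 ≤ A1.card := by
    have := Finset.le_card_sdiff ({φ i0} : Finset (Line (Fin n))) (linesOf e0)
    rw [card_linesOf] at this
    simpa using this
  have hB3 : 3 ≤ B.card := by
    by_cases hc : φ i0 ∈ linesOf e1
    · have hdisj : Disjoint A1 A2 := by
        rw [Finset.disjoint_left]
        intro x hx1 hx2
        simp only [hA1def, hA2def, Finset.mem_sdiff, Finset.mem_singleton,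
          Finset.mem_insert] at hx1 hx2
        have h2lt : 1 < (linesOf e0 ∩ linesOf e1).card := by
          apply Finset.one_lt_card.2
          exact ⟨x, Finset.mem_inter.2 ⟨hx1.1, hx2.1⟩, φ i0,
            Finset.mem_inter.2 ⟨hφ0mem, hc⟩, hx1.2⟩
        exact absurd (shared_le_one hL he0L he1L hne) (by omega)
      have hA2card : 1 ≤ A2.card := by
        have := Finset.le_card_sdiff ({φ i0, φ i1} : Finset (Line (Fin n))) (linesOf e1)
        rw [card_linesOf, ← hA2def] at this
        have hc2 : ({φ i0, φ i1} : Finset (Line (Fin n))).card ≤ 2 :=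
          Finset.card_insert_le _ _ |>.trans (by simp)
        omega
      rw [hBdef, Finset.card_union_of_disjoint hdisj]
      omega
    · have hA2eq : A2 = linesOf e1 \ {φ i1} := by
        rw [hA2def]
        ext x
        simp only [Finset.mem_sdiff, Finset.mem_insert, Finset.mem_singleton]
        constructor
        · rintro ⟨h1, h2⟩; exact ⟨h1, fun h => h2 (Or.inr h)⟩
        · rintro ⟨h1, h2⟩
          refine ⟨h1, ?_⟩
          rintro (h | h)
          · rw [h] at h1; exact hc h1
          · exact h2 h
      have hA2card : 2 ≤ A2.card := by
        rw [hA2eq]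
        have := Finset.le_card_sdiff ({φ i1} : Finset (Line (Fin n))) (linesOf e1)
        rw [card_linesOf] at this
        simpa using this
      have hIcard : (A1 ∩ A2).card ≤ 1 := by
        refine le_trans (Finset.card_le_card ?_) (shared_le_one hL he0L he1L hne)
        intro x hx
        simp only [Finset.mem_inter, hA1def, hA2def, Finset.mem_sdiff] at hx ⊢
        exact ⟨hx.1.1, hx.2.1⟩
      have := Finset.card_union_add_card_inter A1 A2
      rw [← hBdef] at this
      omega
  have hcase : ∀ i : Fin d, i = i0 ∨ i = i1 ∨ 1 < i.1 := by
    intro i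
    by_cases h0' : i.1 = 0
    · exact Or.inl (Fin.ext h0')
    by_cases h1' : i.1 = 1
    · exact Or.inr (Or.inl (Fin.ext h1'))
    · exact Or.inr (Or.inr (by omega))
  have hrange : ∀ i : Fin d, φ i ∉ B := by
    intro i
    rw [hBdef, Finset.mem_union]
    rcases hcase i with rfl | rfl | hi
    · rintro (h | h)
      · exact (Finset.mem_sdiff.1 h).2 (Finset.mem_singleton_self _)
      · exact (Finset.mem_sdiff.1 h).2 (Finset.mem_insert_self _ _)
    · rintro (h | h)
      · exact hφ1e0 (Finset.mem_sdiff.1 h).1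
      · exact (Finset.mem_sdiff.1 h).2
          (Finset.mem_insert.2 (Or.inr (Finset.mem_singleton_self _)))
    · rintro (h | h)
      · have hno : ¬ onLine e0 (φ i) := hφB i i0 (by simp [i0]; omega)
        exact hno (mem_linesOf.1 (Finset.mem_sdiff.1 h).1)
      · have hno : ¬ onLine e1 (φ i) := hφB i i1 (by simpa [i1] using hi)
        exact hno (mem_linesOf.1 (Finset.mem_sdiff.1 h).1)
  have hinj : Set.InjOn φ (Finset.univ : Finset (Fin d)) := by
    intro i _ j _ hij
    rcases lt_trichotomy (i : ℕ) (j : ℕ) with h | h | h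
    · exact absurd (hij ▸ hφA i) (hφB j i h)
    · exact Fin.ext h
    · exact absurd (hij ▸ hφA j) (hφB i j h)
  have hmaps : ∀ i ∈ (Finset.univ : Finset (Fin d)), φ i ∈ Bᶜ := by
    intro i _
    rw [Finset.mem_compl]
    exact hrange i
  have hcard := Finset.card_le_card_of_injOn φ hmaps hinj
  have hcard' : d ≤ Bᶜ.card := by simpa using hcard
  have hsum : B.card + Bᶜ.card = Fintype.card (Line (Fin n)) := Finset.card_add_card_compl B
  have hft : Fintype.card (Line (Fin n)) = 3 * n := by
    simp [Fintype.card_prod]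
  omega
section Greedy
variable {X : Type*} [DecidableEq X]

/-- No entry of `L` has exactly one uncovered line. -/
def StuckAt (L : Finset (Entry X)) (es : List (Entry X)) : Prop :=
  ∀ e ∈ L,
    (e.2.1 ∈ covC es → e.2.2 ∈ covS es → e.1 ∈ covR es) ∧
    (e.1 ∈ covR es → e.2.2 ∈ covS es → e.2.1 ∈ covC es) ∧
    (e.1 ∈ covR es → e.2.1 ∈ covC es → e.2.2 ∈ covS es)

def covcard (es : List (Entry X)) : ℕ :=
  (covR es).card + (covC es).card + (covS es).card

lemma greedy [Fintype X] {L : Finset (Entry X)} :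
    ∀ u : ℕ, ∀ es : List (Entry X), Grev L es →
    3 * Fintype.card X ≤ covcard es + u →
    ∃ es' : List (Entry X), Grev L es' ∧ StuckAt L es' ∧
      covR es ⊆ covR es' ∧ covC es ⊆ covC es' ∧ covS es ⊆ covS es' ∧
      es'.length + covcard es = es.length + covcard es' := by
  intro u
  induction u with
  | zero =>
      intro es hg hcc
      have h1 : (covR es).card ≤ Fintype.card X := by
        simpa using Finset.card_le_univ (covR es)
      have h2 : (covC es).card ≤ Fintype.card X := by
        simpa using Finset.card_le_univ (covC es)
      have h3 : (covS es).card ≤ Fintype.card X := by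
        simpa using Finset.card_le_univ (covS es)
      rw [covcard] at hcc
      have hR : covR es = Finset.univ := Finset.eq_univ_of_card _ (by omega)
      have hC : covC es = Finset.univ := Finset.eq_univ_of_card _ (by omega)
      have hS : covS es = Finset.univ := Finset.eq_univ_of_card _ (by omega)
      exact ⟨es, hg, fun e _ => by simp [hR, hC, hS], subset_rfl, subset_rfl, subset_rfl, rfl⟩
  | succ u ih =>
      intro es hg hcc
      by_cases hs : StuckAt L es
      · exact ⟨es, hg, hs, subset_rfl, subset_rfl, subset_rfl, rfl⟩
      · have hs' : ∃ e ∈ L, ¬ ((e.2.1 ∈ covC es → e.2.2 ∈ covS es → e.1 ∈ covR es) ∧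
            (e.1 ∈ covR es → e.2.2 ∈ covS es → e.2.1 ∈ covC es) ∧
            (e.1 ∈ covR es → e.2.1 ∈ covC es → e.2.2 ∈ covS es)) := by
          by_contra hno
          push_neg at hno
          exact hs fun e heL => hno e heL
        obtain ⟨e, heL, hne⟩ := hs'
        have key : ∃ e' : Entry X, e' ∈ L ∧ Grev L (e' :: es) ∧ covcard (e' :: es) = covcard es + 1 := by
          by_cases hA : (e.2.1 ∈ covC es → e.2.2 ∈ covS es → e.1 ∈ covR es)
          case neg =>
            push_neg at hA
            obtain ⟨hc, hsym, hr⟩ := hA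
            refine ⟨e, heL, ⟨heL, ⟨((0 : Fin 3), e.1), (onLine_row e e.1).2 rfl, ?_⟩, hg⟩, ?_⟩
            · intro f hf hon
              exact hr (mem_covR.2 ⟨f, hf, (onLine_row f e.1).1 hon⟩)
            · rw [covcard, covcard, covR_cons, covC_cons, covS_cons,
                Finset.card_insert_of_notMem hr, Finset.insert_eq_self.2 hc,
                Finset.insert_eq_self.2 hsym]
              omega
          by_cases hB : (e.1 ∈ covR es → e.2.2 ∈ covS es → e.2.1 ∈ covC es)
          case neg =>
            push_neg at hB
            obtain ⟨hr, hsym, hc⟩ := hB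
            refine ⟨e, heL, ⟨heL, ⟨((1 : Fin 3), e.2.1), (onLine_col e e.2.1).2 rfl, ?_⟩, hg⟩, ?_⟩
            · intro f hf hon
              exact hc (mem_covC.2 ⟨f, hf, (onLine_col f e.2.1).1 hon⟩)
            · rw [covcard, covcard, covR_cons, covC_cons, covS_cons,
                Finset.card_insert_of_notMem hc, Finset.insert_eq_self.2 hr,
                Finset.insert_eq_self.2 hsym]
              omega
          case pos =>
            have hC : ¬ (e.1 ∈ covR es → e.2.1 ∈ covC es → e.2.2 ∈ covS es) :=
              fun h => hne ⟨hA, hB, h⟩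
            push_neg at hC
            obtain ⟨hr, hc, hsym⟩ := hC
            refine ⟨e, heL, ⟨heL, ⟨((2 : Fin 3), e.2.2), (onLine_sym e e.2.2).2 rfl, ?_⟩, hg⟩, ?_⟩
            · intro f hf hon
              exact hsym (mem_covS.2 ⟨f, hf, (onLine_sym f e.2.2).1 hon⟩)
            · rw [covcard, covcard, covR_cons, covC_cons, covS_cons,
                Finset.card_insert_of_notMem hsym, Finset.insert_eq_self.2 hr,
                Finset.insert_eq_self.2 hc]
              omega
        obtain ⟨e', he'L, hg', hcc'⟩ := key
        obtain ⟨es', h1, h2, h3, h4, h5, h6⟩ := ih (e' :: es) hg' (by omega)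
        refine ⟨es', h1, h2, ?_, ?_, ?_, ?_⟩
        · exact (by rw [covR_cons]; exact Finset.subset_insert _ _ : covR es ⊆ covR (e' :: es)).trans h3
        · exact (by rw [covC_cons]; exact Finset.subset_insert _ _ : covC es ⊆ covC (e' :: es)).trans h4
        · exact (by rw [covS_cons]; exact Finset.subset_insert _ _ : covS es ⊆ covS (e' :: es)).trans h5
        · have : (e' :: es).length = es.length + 1 := rfl
          omega

lemma stuck_cards {L : Finset (Entry X)} (hL : IsLatin L) {es : List (Entry X)}
    (hs : StuckAt L es) (hR : (covR es).Nonempty) (hC : (covC es).Nonempty)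
    (hS : (covS es).Nonempty) :
    (covR es).card = (covC es).card ∧ (covC es).card = (covS es).card := by
  obtain ⟨r₀, hr₀⟩ := hR
  obtain ⟨c₀, hc₀⟩ := hC
  obtain ⟨s₀, hs₀⟩ := hS
  have hCS : (covC es).card ≤ (covS es).card := by
    apply Finset.card_le_card_of_injOn (fun c => (hL.1 r₀ c).exists.choose)
    · intro c hc
      have hmem : (r₀, c, (hL.1 r₀ c).exists.choose) ∈ L := (hL.1 r₀ c).exists.choose_spec
      exact (hs _ hmem).2.2 hr₀ hc
    · intro c1 _ c2 _ hcc
      have h1 : (r₀, c1, (hL.1 r₀ c1).exists.choose) ∈ L := (hL.1 r₀ c1).exists.choose_spec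
      have h2 : (r₀, c2, (hL.1 r₀ c2).exists.choose) ∈ L := (hL.1 r₀ c2).exists.choose_spec
      replace hcc : (hL.1 r₀ c1).exists.choose = (hL.1 r₀ c2).exists.choose := hcc
      rw [hcc] at h1
      exact (hL.2.1 r₀ ((hL.1 r₀ c2).exists.choose)).unique h1 h2
  have hSR : (covS es).card ≤ (covR es).card := by
    apply Finset.card_le_card_of_injOn (fun s => (hL.2.2 c₀ s).exists.choose)
    · intro s hsm
      have hmem : ((hL.2.2 c₀ s).exists.choose, c₀, s) ∈ L := (hL.2.2 c₀ s).exists.choose_spec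
      exact (hs _ hmem).1 hc₀ hsm
    · intro s1 _ s2 _ hss
      have h1 : ((hL.2.2 c₀ s1).exists.choose, c₀, s1) ∈ L := (hL.2.2 c₀ s1).exists.choose_spec
      have h2 : ((hL.2.2 c₀ s2).exists.choose, c₀, s2) ∈ L := (hL.2.2 c₀ s2).exists.choose_spec
      replace hss : (hL.2.2 c₀ s1).exists.choose = (hL.2.2 c₀ s2).exists.choose := hss
      rw [hss] at h1
      exact (hL.1 ((hL.2.2 c₀ s2).exists.choose) c₀).unique h1 h2
  have hRC : (covR es).card ≤ (covC es).card := by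
    apply Finset.card_le_card_of_injOn (fun r => (hL.2.1 r s₀).exists.choose)
    · intro r hrm
      have hmem : (r, (hL.2.1 r s₀).exists.choose, s₀) ∈ L := (hL.2.1 r s₀).exists.choose_spec
      exact (hs _ hmem).2.1 hrm hs₀
    · intro r1 _ r2 _ hrr
      have h1 : (r1, (hL.2.1 r1 s₀).exists.choose, s₀) ∈ L := (hL.2.1 r1 s₀).exists.choose_spec
      have h2 : (r2, (hL.2.1 r2 s₀).exists.choose, s₀) ∈ L := (hL.2.1 r2 s₀).exists.choose_spec
      replace hrr : (hL.2.1 r1 s₀).exists.choose = (hL.2.1 r2 s₀).exists.choose := hrr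
      rw [hrr] at h1
      exact (hL.2.2 ((hL.2.1 r2 s₀).exists.choose) s₀).unique h1 h2
  omega

end Greedy
lemma mainrec {n : ℕ} {L : Finset (Entry (Fin n))} (hL : IsLatin L) :
    ∀ k j : ℕ, ∀ es : List (Entry (Fin n)), Grev L es → StuckAt L es →
    (covR es).Nonempty → (covC es).Nonempty → (covS es).Nonempty →
    2 ^ j ≤ (covR es).card →
    covcard es ≤ es.length + 2 + j →
    n ≤ (covR es).card + k →
    ∃ es' : List (Entry (Fin n)), Grev L es' ∧
      covR es' = Finset.univ ∧ covC es' = Finset.univ ∧ covS es' = Finset.univ ∧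
      3 * n ≤ es'.length + 2 + Nat.log 2 n := by
  intro k
  induction k with
  | zero =>
      intro j es hg hs hR hC hS hpow hcov hnk
      have hcards := stuck_cards hL hs hR hC hS
      have hRn : (covR es).card ≤ n := by simpa using Finset.card_le_univ (covR es)
      have hReq : (covR es).card = n := by omega
      have hRu : covR es = Finset.univ := Finset.eq_univ_of_card _ (by simpa using hReq)
      have hCu : covC es = Finset.univ := Finset.eq_univ_of_card _ (by simp; omega)
      have hSu : covS es = Finset.univ := Finset.eq_univ_of_card _ (by simp; omega)
      have hj : j ≤ Nat.log 2 n := by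
        apply Nat.le_log_of_pow_le (by norm_num)
        omega
      have hcc : covcard es = 3 * n := by rw [covcard]; omega
      exact ⟨es, hg, hRu, hCu, hSu, by omega⟩
  | succ k ih =>
      intro j es hg hs hR hC hS hpow hcov hnk
      have hcards := stuck_cards hL hs hR hC hS
      have hRn : (covR es).card ≤ n := by simpa using Finset.card_le_univ (covR es)
      by_cases hfull : (covR es).card = n
      · -- done: same as base case
        have hRu : covR es = Finset.univ := Finset.eq_univ_of_card _ (by simpa using hfull)
        have hCu : covC es = Finset.univ := Finset.eq_univ_of_card _ (by simp; omega)
        have hSu : covS es = Finset.univ := Finset.eq_univ_of_card _ (by simp; omega)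
        have hj : j ≤ Nat.log 2 n := by
          apply Nat.le_log_of_pow_le (by norm_num)
          omega
        have hcc : covcard es = 3 * n := by rw [covcard]; omega
        exact ⟨es, hg, hRu, hCu, hSu, by omega⟩
      · -- jump
        set m := (covR es).card with hm
        have hmlt : m < n := lt_of_le_of_ne hRn hfull
        have hm1 : 1 ≤ m := le_trans (Nat.one_le_two_pow) hpow
        obtain ⟨c₀, hc₀⟩ := hC
        have hr₀ : ∃ r : Fin n, r ∉ covR es := by
          by_contra hno
          push_neg at hno
          have : covR es = Finset.univ := Finset.eq_univ_iff_forall.2 hno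
          rw [this] at hm
          simp at hm
          omega
        obtain ⟨r₀, hr₀⟩ := hr₀
        set s₁ : Fin n := (hL.1 r₀ c₀).exists.choose with hs₁
        have heL : (r₀, c₀, s₁) ∈ L := (hL.1 r₀ c₀).exists.choose_spec
        have hs₁not : s₁ ∉ covS es := fun hmem => hr₀ ((hs _ heL).1 hc₀ hmem)
        set es₁ : List (Entry (Fin n)) := (r₀, c₀, s₁) :: es with hes₁
        have hg₁ : Grev L es₁ := by
          refine ⟨heL, ⟨((0 : Fin 3), r₀), (onLine_row _ _).2 rfl, ?_⟩, hg⟩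
          intro f hf hon
          exact hr₀ (mem_covR.2 ⟨f, hf, (onLine_row f r₀).1 hon⟩)
        have hcov₁ : covcard es₁ = covcard es + 2 := by
          rw [covcard, covcard, hes₁, covR_cons, covC_cons, covS_cons,
            Finset.card_insert_of_notMem hr₀, Finset.insert_eq_self.2 hc₀,
            Finset.card_insert_of_notMem hs₁not]
          omega
        obtain ⟨es₂, hg₂, hs₂, hsubR, hsubC, hsubS, hlen₂⟩ :=
          greedy (3 * n) es₁ hg₁ (by rw [Fintype.card_fin]; omega)
        have hsubR' : covR es ⊆ covR es₂ := by
          refine subset_trans ?_ hsubR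
          rw [hes₁, covR_cons]; exact Finset.subset_insert _ _
        have hsubC' : covC es ⊆ covC es₂ := by
          refine subset_trans ?_ hsubC
          rw [hes₁, covC_cons]; exact Finset.subset_insert _ _
        have hsubS' : covS es ⊆ covS es₂ := by
          refine subset_trans ?_ hsubS
          rw [hes₁, covS_cons]; exact Finset.subset_insert _ _
        have hr₀mem : r₀ ∈ covR es₂ := hsubR (by rw [hes₁, covR_cons]; exact Finset.mem_insert_self _ _)
        -- doubling: |covS es₂| ≥ 2 m
        have hdbl : m ≤ (covS es₂ \ covS es).card := by
          have : (covC es).card ≤ (covS es₂ \ covS es).card := by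
            apply Finset.card_le_card_of_injOn (fun c => (hL.1 r₀ c).exists.choose)
            · intro c hc
              have hmem : (r₀, c, (hL.1 r₀ c).exists.choose) ∈ L := (hL.1 r₀ c).exists.choose_spec
              rw [Finset.mem_coe, Finset.mem_sdiff]
              constructor
              · exact (hs₂ _ hmem).2.2 hr₀mem (hsubC' hc)
              · intro hbad
                exact hr₀ ((hs _ hmem).1 hc hbad)
            · intro c1 _ c2 _ hcc
              replace hcc : (hL.1 r₀ c1).exists.choose = (hL.1 r₀ c2).exists.choose := hcc
              have h1 : (r₀, c1, (hL.1 r₀ c1).exists.choose) ∈ L := (hL.1 r₀ c1).exists.choose_spec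
              have h2 : (r₀, c2, (hL.1 r₀ c2).exists.choose) ∈ L := (hL.1 r₀ c2).exists.choose_spec
              rw [hcc] at h1
              exact (hL.2.1 r₀ ((hL.1 r₀ c2).exists.choose)).unique h1 h2
          omega
        have hsdiff : (covS es₂ \ covS es).card = (covS es₂).card - (covS es).card :=
          Finset.card_sdiff_of_subset hsubS'
        have hmono : (covS es).card ≤ (covS es₂).card := Finset.card_le_card hsubS'
        have hS₂ : 2 * m ≤ (covS es₂).card := by omega
        have hR₂ : (covR es).Nonempty → True := fun _ => trivial
        have hcards₂ := stuck_cards hL hs₂ ⟨r₀, hr₀mem⟩ ⟨c₀, hsubC' hc₀⟩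
          ⟨s₁, hsubS (by rw [hes₁, covS_cons]; exact Finset.mem_insert_self _ _)⟩
        have hpow₂ : 2 ^ (j + 1) ≤ (covR es₂).card := by
          rw [pow_succ]
          omega
        have hcov₂ : covcard es₂ ≤ es₂.length + 2 + (j + 1) := by
          have hlen1 : es₁.length = es.length + 1 := rfl
          omega
        have hnk₂ : n ≤ (covR es₂).card + k := by omega
        exact ih (j + 1) es₂ hg₂ hs₂ ⟨r₀, hr₀mem⟩ ⟨c₀, hsubC' hc₀⟩
          ⟨s₁, hsubS (by rw [hes₁, covS_cons]; exact Finset.mem_insert_self _ _)⟩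
          hpow₂ hcov₂ hnk₂
lemma exists_coverseq {n : ℕ} (hn : 2 ≤ n) {L : Finset (Entry (Fin n))} (hL : IsLatin L) :
    ∃ es : List (Entry (Fin n)), IsCoverSeq L es ∧ 3 * n ≤ es.length + 2 + Nat.log 2 n := by
  have hz : 0 < n := by omega
  set z : Fin n := ⟨0, hz⟩
  set s₀ : Fin n := (hL.1 z z).exists.choose with hs₀
  have he₀ : (z, z, s₀) ∈ L := (hL.1 z z).exists.choose_spec
  set es₀ : List (Entry (Fin n)) := [(z, z, s₀)] with hes₀
  have hg₀ : Grev L es₀ := by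
    refine ⟨he₀, ⟨((0 : Fin 3), z), (onLine_row _ _).2 rfl, by simp⟩, trivial⟩
  have hcc₀ : covcard es₀ = 3 := by
    simp [covcard, covR, covC, covS, hes₀]
  obtain ⟨es₂, hg₂, hs₂, hsubR, hsubC, hsubS, hlen₂⟩ :=
    greedy (3 * n) es₀ hg₀ (by rw [Fintype.card_fin]; omega)
  have hzR : z ∈ covR es₂ := hsubR (by simp [hes₀, covR])
  have hzC : z ∈ covC es₂ := hsubC (by simp [hes₀, covC])
  have hsS : s₀ ∈ covS es₂ := hsubS (by simp [hes₀, covS])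
  have hlen₀ : es₀.length = 1 := rfl
  obtain ⟨esF, hgF, hRu, hCu, hSu, hbound⟩ :=
    mainrec hL n 0 es₂ hg₂ hs₂ ⟨z, hzR⟩ ⟨z, hzC⟩ ⟨s₀, hsS⟩
      (by simpa using Finset.card_pos.2 ⟨z, hzR⟩)
      (by omega)
      (by omega)
  refine ⟨esF.reverse, ⟨grev_weak hgF, ?_⟩, by simpa using hbound⟩
  rintro ⟨t, x⟩
  fin_cases t
  · have hx : x ∈ covR esF := by rw [hRu]; exact Finset.mem_univ x
    obtain ⟨e, he, hex⟩ := mem_covR.1 hx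
    exact ⟨e, List.mem_reverse.2 he, (onLine_row e x).2 hex⟩
  · have hx : x ∈ covC esF := by rw [hCu]; exact Finset.mem_univ x
    obtain ⟨e, he, hex⟩ := mem_covC.1 hx
    exact ⟨e, List.mem_reverse.2 he, (onLine_col e x).2 hex⟩
  · have hx : x ∈ covS esF := by rw [hSu]; exact Finset.mem_univ x
    obtain ⟨e, he, hex⟩ := mem_covS.1 hx
    exact ⟨e, List.mem_reverse.2 he, (onLine_sym e x).2 hex⟩

theorem stmt11 {n : ℕ} (hn : 2 ≤ n) (L : Finset (Entry (Fin n))) (hL : IsLatin L) :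
    3 * (n : ℤ) - 2 - Nat.log 2 n ≤ (mcs L : ℤ) ∧ (mcs L : ℤ) ≤ 3 * (n : ℤ) - 3 := by
  have hmcs : mcs L = sSup {d | ∃ es : List (Entry (Fin n)), IsCoverSeq L es ∧ es.length = d} :=
    rfl
  have hbdd : BddAbove {d | ∃ es : List (Entry (Fin n)), IsCoverSeq L es ∧ es.length = d} := by
    refine ⟨3 * n, ?_⟩
    rintro d ⟨es, hcs, rfl⟩
    have := upper_len hn hL hcs.1
    omega
  obtain ⟨es', hcs', hlen'⟩ := exists_coverseq hn hL
  have hmem : es'.length ∈ {d | ∃ es : List (Entry (Fin n)), IsCoverSeq L es ∧ es.length = d} :=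
    ⟨es', hcs', rfl⟩
  have h1 : es'.length ≤ mcs L := by
    rw [hmcs]
    exact le_csSup hbdd hmem
  have hsup_mem : mcs L ∈ {d | ∃ es : List (Entry (Fin n)), IsCoverSeq L es ∧ es.length = d} := by
    rw [hmcs]
    exact Nat.sSup_mem ⟨es'.length, hmem⟩ hbdd
  obtain ⟨esM, hcsM, hlenM⟩ := hsup_mem
  have h2 : esM.length + 3 ≤ 3 * n := upper_len hn hL hcsM.1
  constructor <;> omega
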